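/- Let α, β > 0 and let v : ℝ → ℝ be continuously differentiable on [0,∞) with v(t) ≥ 0 for all t ≥ 0 and v'(t) ≤ -α·v(t) + β·√(v(t)) for all t ≥ 0. Then for all t ≥ 0, v(t) ≤ ( e^{-α t/2}·√(v(0)) + β/α )². -/

import Mathlib

/-- Second inequality of the technical Gronwall-type Lemma A.1 specialized to `ζ = 0`:
for a nonnegative continuously differentiable function `v` on `[0,∞)` satisfying
`v' t ≤ -α v t + β √(v t)`, one has `v t ≤ (e^{-α t/2} √(v 0) + β/α)²`. -/
theorem gronwall_sqrt_exp_zero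
    (α β : ℝ) (hα : 0 < α) (hβ : 0 < β)
    (v v' : ℝ → ℝ)
    (hderiv : ∀ t ∈ Set.Ici (0 : ℝ), HasDerivWithinAt v (v' t) (Set.Ici 0) t)
    (hcont : ContinuousOn v' (Set.Ici 0))
    (hnonneg : ∀ t ≥ (0 : ℝ), 0 ≤ v t)
    (hineq : ∀ t ≥ (0 : ℝ), v' t ≤ -α * v t + β * Real.sqrt (v t)) :
    ∀ t ≥ (0 : ℝ),
      v t ≤ (Real.exp (-α * t / 2) * Real.sqrt (v 0) + β / α) ^ 2 := by
  intro t ht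
  -- Step 1: for every δ > 0, v t ≤ (e^{-αt/2}(√v₀+δ)+β/α+δ)².
  have key : ∀ δ > (0 : ℝ),
      v t ≤ (Real.exp (-α * t / 2) * (Real.sqrt (v 0) + δ) + (β / α + δ)) ^ 2 := by
    intro δ hδ
    set a : ℝ := Real.sqrt (v 0) + δ with ha_def
    set c : ℝ := β / α + δ with hc_def
    have ha : 0 < a := lt_of_lt_of_le hδ (by simp [ha_def, Real.sqrt_nonneg])
    have hc : 0 < c := by positivity
    set B : ℝ → ℝ := fun s => (Real.exp (-α * s / 2) * a + c) ^ 2 with hB_def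
    set B' : ℝ → ℝ := fun s =>
      2 * (Real.exp (-α * s / 2) * a + c) ^ 1 *
        (Real.exp (-α * s / 2) * (-α / 2) * a) with hB'_def
    have hB : ∀ x, HasDerivAt B (B' x) x := by
      intro x
      have h1 : HasDerivAt (fun s : ℝ => -α * s / 2) (-α / 2) x := by
        simpa using (((hasDerivAt_id x).const_mul (-α)).div_const 2)
      have h2 : HasDerivAt (fun s : ℝ => Real.exp (-α * s / 2))
          (Real.exp (-α * x / 2) * (-α / 2)) x := h1.exp
      have h3 : HasDerivAt (fun s : ℝ => Real.exp (-α * s / 2) * a + c)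
          (Real.exp (-α * x / 2) * (-α / 2) * a) x := (h2.mul_const a).add_const c
      simpa [hB_def, hB'_def] using h3.fun_pow 2
    have hcomp := image_le_of_deriv_right_lt_deriv_boundary
      (f := v) (f' := v') (a := 0) (b := t) (B := B) (B' := B')
      (fun x hx => ((hderiv x hx.1).continuousWithinAt).mono
        (fun y hy => hy.1))
      (fun x hx => (hderiv x hx.1).mono (Set.Ici_subset_Ici.2 hx.1))
      ?ha hB ?bound
    · exact hcomp ⟨ht, le_rfl⟩
    · -- v 0 ≤ B 0
      have h0 : v 0 = (Real.sqrt (v 0)) ^ 2 := (Real.sq_sqrt (hnonneg 0 le_rfl)).symm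
      rw [h0]
      have he : Real.exp (-α * 0 / 2) = 1 := by norm_num
      have : Real.sqrt (v 0) ≤ Real.exp (-α * 0 / 2) * a + c := by
        rw [he]; nlinarith [Real.sqrt_nonneg (v 0)]
      exact pow_le_pow_left₀ (Real.sqrt_nonneg _) this 2
    · -- touching point bound
      intro x hx hvB
      have hx0 : (0 : ℝ) ≤ x := hx.1
      set u : ℝ := Real.exp (-α * x / 2) * a + c with hu_def
      have hepos : 0 < Real.exp (-α * x / 2) := Real.exp_pos _
      have hu : 0 < u := by positivity
      have hsq : Real.sqrt (v x) = u := by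
        rw [hvB]
        simpa [hB_def, hu_def] using Real.sqrt_sq hu.le
      have h1 : v' x ≤ -α * u ^ 2 + β * u := by
        have := hineq x hx0
        rw [hsq, hvB] at this
        simpa [hB_def, hu_def] using this
      have h2 : B' x = -α * u ^ 2 + α * c * u - α * c * (Real.exp (-α * x / 2) * a + c - u) := by
        simp only [hB'_def, hu_def]
        ring
      have h3 : B' x = -α * u ^ 2 + α * c * u := by rw [h2]; simp [hu_def]
      rw [h3]
      have hβc : β < α * c := by
        rw [hc_def]
        have : α * (β / α) = β := by field_simp
        nlinarith
      nlinarith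
  -- Step 2: let δ → 0⁺.
  have htend : Filter.Tendsto
      (fun δ : ℝ => (Real.exp (-α * t / 2) * (Real.sqrt (v 0) + δ) + (β / α + δ)) ^ 2)
      (nhdsWithin 0 (Set.Ioi 0))
      (nhds ((Real.exp (-α * t / 2) * Real.sqrt (v 0) + β / α) ^ 2)) := by
    have hcont2 : Continuous
        (fun δ : ℝ => (Real.exp (-α * t / 2) * (Real.sqrt (v 0) + δ) + (β / α + δ)) ^ 2) := by
      continuity
    have := hcont2.tendsto 0
    simp only [add_zero] at this
    exact this.mono_left nhdsWithin_le_nhds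
  exact ge_of_tendsto htend
    (Filter.eventually_of_mem self_mem_nhdsWithin fun δ hδ => key δ hδ)
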